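/- Let A, B, X ⊆ ℝ^d with A ⊆ X ⊕ B_δ[0] for some δ > 0, and let r > r' > 0 with r − r' ≥ δ. Then (A ⊕ B_{r'}[0]) ⊖ B_{r'}[0] ⊖ B_{r−r'}[0] ⊆ (X ⊕ B_r[0]) ⊖ B_r[0]; in particular C_{r'}(A) ⊖ B_{r−r'}[0] ⊆ C_r(X). -/

import Mathlib

open Pointwise

/-- Minkowski erosion. -/
def erode {d : ℕ} (C D : Set (EuclideanSpace ℝ (Fin d))) :
    Set (EuclideanSpace ℝ (Fin d)) :=
  {x | ∀ y ∈ D, x + y ∈ C}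

/-- Ball closing (the `ρ`-convex hull as a morphological closing). -/
def closing {d : ℕ} (ρ : ℝ) (S : Set (EuclideanSpace ℝ (Fin d))) :
    Set (EuclideanSpace ℝ (Fin d)) :=
  erode (S + Metric.closedBall (0 : EuclideanSpace ℝ (Fin d)) ρ)
    (Metric.closedBall (0 : EuclideanSpace ℝ (Fin d)) ρ)

/-- If `A ⊆ X ⊕ B_δ[0]` and `r > r' > 0` with `r − r' ≥ δ`, then
`C_{r'}(A) ⊖ B_{r−r'}[0] ⊆ C_r(X)`. -/
theorem closing_erosion_subset {d : ℕ} {A X : Set (EuclideanSpace ℝ (Fin d))}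
    {δ r r' : ℝ} (hδ : 0 < δ) (hr' : 0 < r') (hrr' : r' < r) (hge : δ ≤ r - r')
    (hAX : A ⊆ X + Metric.closedBall (0 : EuclideanSpace ℝ (Fin d)) δ) :
    erode (closing r' A) (Metric.closedBall (0 : EuclideanSpace ℝ (Fin d)) (r - r'))
      ⊆ closing r X := by
  have hr : 0 < r := hr'.trans hrr'
  intro x hx w hw
  simp only [Metric.mem_closedBall, dist_zero_right] at hw
  -- decompose w = y + z
  set y : EuclideanSpace ℝ (Fin d) := ((r - r') / r) • w with hy
  set z : EuclideanSpace ℝ (Fin d) := (r' / r) • w with hz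
  have hyz : w = y + z := by
    rw [hy, hz, ← add_smul]
    rw [← add_div, sub_add_cancel, div_self hr.ne', one_smul]
  have hyn : ‖y‖ ≤ r - r' := by
    rw [hy, norm_smul, Real.norm_eq_abs]
    have : |(r - r') / r| = (r - r') / r := abs_of_nonneg (div_nonneg (by linarith) hr.le)
    rw [this]
    calc (r - r') / r * ‖w‖ ≤ (r - r') / r * r := by
          apply mul_le_mul_of_nonneg_left hw (div_nonneg (by linarith) hr.le)
      _ = r - r' := by field_simp
  have hzn : ‖z‖ ≤ r' := by
    rw [hz, norm_smul, Real.norm_eq_abs]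
    have : |r' / r| = r' / r := abs_of_nonneg (by positivity)
    rw [this]
    calc r' / r * ‖w‖ ≤ r' / r * r := by
          apply mul_le_mul_of_nonneg_left hw (by positivity)
      _ = r' := by field_simp
  have h1 : x + y ∈ closing r' A := hx y (by
    simp only [Metric.mem_closedBall, dist_zero_right]; exact hyn)
  have h2 : x + y + z ∈ A + Metric.closedBall (0 : EuclideanSpace ℝ (Fin d)) r' :=
    h1 z (by simp only [Metric.mem_closedBall, dist_zero_right]; exact hzn)
  obtain ⟨a, ha, u, hu, hau⟩ := h2
  simp only [Metric.mem_closedBall, dist_zero_right] at hu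
  obtain ⟨ξ, hξ, v, hv, hξv⟩ := hAX ha
  simp only [Metric.mem_closedBall, dist_zero_right] at hv
  refine ⟨ξ, hξ, v + u, ?_, ?_⟩
  · simp only [Metric.mem_closedBall, dist_zero_right]
    calc ‖v + u‖ ≤ ‖v‖ + ‖u‖ := norm_add_le _ _
      _ ≤ δ + r' := add_le_add hv hu
      _ ≤ r := by linarith
  · simp only at hau hξv
    show ξ + (v + u) = x + w
    calc ξ + (v + u) = ξ + v + u := by abel
      _ = a + u := by rw [hξv]
      _ = x + y + z := hau
      _ = x + (y + z) := by abel
      _ = x + w := by rw [← hyz]
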